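/- Let C > 0 and, for each n ≥ 1, let λ₁^{(n)},…,λ_n^{(n)} and b₁^{(n)},…,b_n^{(n)} be reals with |λ_i^{(n)}| ≤ C·n^{−3/2} and |b_i^{(n)}| ≤ C·n^{−3/2} for all i. Set s_n² = Σ_{i=1}^n (2(λ_i^{(n)})² + (b_i^{(n)})²) and assume lim inf_n n²·s_n² > 0. If z₁,…,z_n are i.i.d. standard real Gaussians and r_i = λ_i^{(n)}·z_i² + b_i^{(n)}·z_i, then (1/s_n⁴)·Σ_{i=1}^n E[(r_i − E[r_i])⁴] → 0 as n → ∞; that is, Lyapunov's condition (with fourth moments) holds for the triangular array (r_i). -/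

import Mathlib

open MeasureTheory ProbabilityTheory Filter Real

noncomputable section
namespace LSSVM

lemma pow_pdf_bound (k : ℕ) (x : ℝ) :
    ‖x ^ k * (gaussianPDF 0 1 x).toReal‖ ≤
      ((Real.sqrt (2 * π))⁻¹ * (k.factorial * Real.exp 1)) * Real.exp (-(1/4) * x ^ 2) := by
  have hpdfnn := gaussianPDFReal_nonneg 0 1 x
  rw [gaussianPDF, ENNReal.toReal_ofReal hpdfnn]
  have hpdf : gaussianPDFReal 0 1 x = (Real.sqrt (2 * π))⁻¹ * Real.exp (-(1/2) * x ^ 2) := by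
    simp only [gaussianPDFReal]
    norm_num
    left; ring
  have h1 : |x| ^ k ≤ k.factorial * Real.exp |x| := by
    have := Real.pow_div_factorial_le_exp |x| (abs_nonneg x) k
    rw [div_le_iff₀ (by positivity)] at this
    linarith [this]
  have h2 : Real.exp |x| * Real.exp (-(1/2) * x ^ 2) ≤ Real.exp 1 * Real.exp (-(1/4) * x ^ 2) := by
    rw [← Real.exp_add, ← Real.exp_add, Real.exp_le_exp]
    nlinarith [sq_nonneg (|x| - 2), sq_abs x]
  rw [norm_mul, norm_pow, Real.norm_eq_abs, Real.norm_eq_abs, hpdf,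
    abs_of_nonneg (by positivity : (0:ℝ) ≤ (Real.sqrt (2 * π))⁻¹ * Real.exp (-(1/2) * x ^ 2))]
  calc |x| ^ k * ((Real.sqrt (2 * π))⁻¹ * Real.exp (-(1/2) * x ^ 2))
      ≤ (k.factorial * Real.exp |x|) * ((Real.sqrt (2 * π))⁻¹ * Real.exp (-(1/2) * x ^ 2)) := by
        apply mul_le_mul_of_nonneg_right h1 (by positivity)
    _ = (Real.sqrt (2 * π))⁻¹ * k.factorial * (Real.exp |x| * Real.exp (-(1/2) * x ^ 2)) := by ring
    _ ≤ (Real.sqrt (2 * π))⁻¹ * k.factorial * (Real.exp 1 * Real.exp (-(1/4) * x ^ 2)) := by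
        apply mul_le_mul_of_nonneg_left h2 (by positivity)
    _ = ((Real.sqrt (2 * π))⁻¹ * (k.factorial * Real.exp 1)) * Real.exp (-(1/4) * x ^ 2) := by ring

lemma integrable_pow_gaussian (k : ℕ) :
    Integrable (fun x : ℝ => x ^ k) (gaussianReal 0 1) := by
  rw [gaussianReal_of_var_ne_zero 0 one_ne_zero,
    integrable_withDensity_iff (measurable_gaussianPDF 0 1)
      (Filter.Eventually.of_forall fun x => ENNReal.ofReal_lt_top)]
  refine ((integrable_exp_neg_mul_sq (by norm_num : (0:ℝ) < 1/4)).const_mul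
    _).mono' ?_ (Filter.Eventually.of_forall (pow_pdf_bound k))
  exact ((measurable_id.pow_const k).mul
    ((measurable_gaussianPDF 0 1).ennreal_toReal)).aestronglyMeasurable

lemma integrable_abs_gaussian :
    Integrable (fun x : ℝ => |x|) (gaussianReal 0 1) := by
  refine ((integrable_pow_gaussian 0).add (integrable_pow_gaussian 2)).mono'
    measurable_abs.aestronglyMeasurable (Filter.Eventually.of_forall fun x => ?_)
  simp only [Pi.add_apply, Real.norm_eq_abs, abs_abs, pow_zero]
  nlinarith [sq_nonneg (|x| - 1), sq_abs x]



def a1 : ℝ := ∫ x, |x| ∂(gaussianReal 0 1)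
def m2 : ℝ := ∫ x, x ^ 2 ∂(gaussianReal 0 1)
def m4 : ℝ := ∫ x, x ^ 4 ∂(gaussianReal 0 1)
def m8 : ℝ := ∫ x, x ^ 8 ∂(gaussianReal 0 1)

lemma a1_nonneg : 0 ≤ a1 := integral_nonneg fun x => abs_nonneg x
lemma m2_nonneg : 0 ≤ m2 := integral_nonneg fun x => by positivity
lemma m4_nonneg : 0 ≤ m4 := integral_nonneg fun x => by positivity
lemma m8_nonneg : 0 ≤ m8 := integral_nonneg fun x => by positivity

lemma aux_pow4 (a b c : ℝ) : (a + b + c) ^ 4 ≤ 27 * (a ^ 4 + b ^ 4 + c ^ 4) := by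
  nlinarith [sq_nonneg (a - b), sq_nonneg (b - c), sq_nonneg (a - c), sq_nonneg (a + b + c),
    sq_nonneg (a*a - b*b), sq_nonneg (b*b - c*c), sq_nonneg (a*a - c*c),
    sq_nonneg (a + b), sq_nonneg (b + c), sq_nonneg (a + c),
    sq_nonneg ((a+b+c)^2 - 3*(a*b + b*c + a*c)), sq_nonneg (a*b - b*c), sq_nonneg (a*b - a*c),
    sq_nonneg (b*c - a*c), sq_nonneg a, sq_nonneg b, sq_nonneg c]

lemma key (L B : ℝ) :
    ∫ x, (L * x ^ 2 + B * x - ∫ y, (L * y ^ 2 + B * y) ∂(gaussianReal 0 1)) ^ 4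
        ∂(gaussianReal 0 1)
      ≤ 27 * (L ^ 4 * m8 + B ^ 4 * m4 + (|L| * m2 + |B| * a1) ^ 4) := by
  set μ := gaussianReal 0 1
  set E : ℝ := ∫ y, (L * y ^ 2 + B * y) ∂μ with hEdef
  have h2 : Integrable (fun y : ℝ => L * y ^ 2) μ := (integrable_pow_gaussian 2).const_mul L
  have h1 : Integrable (fun y : ℝ => B * y) μ := by
    have := (integrable_pow_gaussian 1).const_mul B
    simpa [pow_one] using this
  have h_intLB : Integrable (fun y : ℝ => L * y ^ 2 + B * y) μ := h2.add h1
  have habs : Integrable (fun y : ℝ => |L| * y ^ 2 + |B| * |y|) μ :=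
    ((integrable_pow_gaussian 2).const_mul |L|).add (integrable_abs_gaussian.const_mul |B|)
  have hE : |E| ≤ |L| * m2 + |B| * a1 := by
    rw [← Real.norm_eq_abs]
    calc ‖E‖ ≤ ∫ y, ‖L * y ^ 2 + B * y‖ ∂μ := norm_integral_le_integral_norm _
      _ ≤ ∫ y, (|L| * y ^ 2 + |B| * |y|) ∂μ := by
          refine integral_mono h_intLB.norm habs fun y => ?_
          rw [Real.norm_eq_abs]
          calc |L * y ^ 2 + B * y| ≤ |L * y ^ 2| + |B * y| := abs_add_le _ _
            _ = |L| * y ^ 2 + |B| * |y| := by rw [abs_mul, abs_mul, abs_pow, sq_abs]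
      _ = |L| * m2 + |B| * a1 := by
          rw [integral_add ((integrable_pow_gaussian 2).const_mul |L|)
            (integrable_abs_gaussian.const_mul |B|), integral_const_mul, integral_const_mul]
          rfl
  have hpt : ∀ x : ℝ, (L * x ^ 2 + B * x - E) ^ 4
      ≤ 27 * (L ^ 4 * x ^ 8 + B ^ 4 * x ^ 4 + E ^ 4) := by
    intro x
    calc (L * x ^ 2 + B * x - E) ^ 4 = (L * x ^ 2 + B * x + -E) ^ 4 := by ring
      _ ≤ 27 * ((L * x ^ 2) ^ 4 + (B * x) ^ 4 + (-E) ^ 4) := aux_pow4 _ _ _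
      _ = 27 * (L ^ 4 * x ^ 8 + B ^ 4 * x ^ 4 + E ^ 4) := by ring
  have g_int : Integrable (fun x : ℝ => 27 * (L ^ 4 * x ^ 8 + B ^ 4 * x ^ 4 + E ^ 4)) μ := by
    refine Integrable.const_mul ?_ 27
    exact (((integrable_pow_gaussian 8).const_mul _).add
      ((integrable_pow_gaussian 4).const_mul _)).add (integrable_const _)
  have lhs_int : Integrable (fun x : ℝ => (L * x ^ 2 + B * x - E) ^ 4) μ := by
    refine g_int.mono' ((((measurable_const.mul (measurable_id.pow_const 2)).add
      (measurable_const.mul measurable_id)).sub measurable_const).pow_const 4).aestronglyMeasurable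
      (Filter.Eventually.of_forall fun x => ?_)
    rw [Real.norm_eq_abs, abs_pow, (by decide : Even 4).pow_abs]
    exact hpt x
  calc ∫ x, (L * x ^ 2 + B * x - E) ^ 4 ∂μ
      ≤ ∫ x, 27 * (L ^ 4 * x ^ 8 + B ^ 4 * x ^ 4 + E ^ 4) ∂μ :=
        integral_mono lhs_int g_int hpt
    _ = 27 * (L ^ 4 * m8 + B ^ 4 * m4 + E ^ 4) := by
        have : IsProbabilityMeasure μ := inferInstance
        have i8 : Integrable (fun x : ℝ => L ^ 4 * x ^ 8) μ :=
          (integrable_pow_gaussian 8).const_mul _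
        have i4 : Integrable (fun x : ℝ => B ^ 4 * x ^ 4) μ :=
          (integrable_pow_gaussian 4).const_mul _
        have i84 : Integrable (fun x : ℝ => L ^ 4 * x ^ 8 + B ^ 4 * x ^ 4) μ := i8.add i4
        rw [integral_const_mul, integral_add i84 (integrable_const _),
          integral_add i8 i4, integral_const_mul, integral_const_mul, integral_const]
        simp [m8, m4, μ]
    _ ≤ 27 * (L ^ 4 * m8 + B ^ 4 * m4 + (|L| * m2 + |B| * a1) ^ 4) := by
        have hE4 : E ^ 4 ≤ (|L| * m2 + |B| * a1) ^ 4 := by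
          rw [← (by decide : Even 4).pow_abs E]
          exact pow_le_pow_left₀ (abs_nonneg E) hE 4
        have := add_le_add_left hE4 (L ^ 4 * m8 + B ^ 4 * m4)
        nlinarith [this]

/-- Total variance `s_n² = Σ_i (2λ_i² + b_i²)` of the triangular array. -/
def sn2 (l b : ℕ → ℕ → ℝ) (n : ℕ) : ℝ :=
  ∑ i ∈ Finset.range n, (2 * l n i ^ 2 + b n i ^ 2)

/-- Lyapunov's condition (with fourth moments) for the triangular array
`r_i = λ_i z_i² + b_i z_i`. -/
theorem statement16 {Ω : Type*} [MeasurableSpace Ω] (P : Measure Ω) [IsProbabilityMeasure P]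
    (C : ℝ) (hC : 0 < C) (l b : ℕ → ℕ → ℝ)
    (hl : ∀ n : ℕ, ∀ i < n, |l n i| ≤ C / (n : ℝ) ^ ((3 : ℝ) / 2))
    (hb : ∀ n : ℕ, ∀ i < n, |b n i| ≤ C / (n : ℝ) ^ ((3 : ℝ) / 2))
    (hliminf : ∃ c > (0 : ℝ), ∀ᶠ n : ℕ in atTop, c ≤ (n : ℝ) ^ 2 * sn2 l b n)
    (z : ℕ → Ω → ℝ) (hmeas : ∀ i, Measurable (z i))
    (hindep : iIndepFun z P)
    (hgauss : ∀ i, Measure.map (z i) P = gaussianReal 0 1) :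
    Tendsto
      (fun n : ℕ => (sn2 l b n ^ 2)⁻¹ * ∑ i ∈ Finset.range n,
        ∫ w, (l n i * z i w ^ 2 + b n i * z i w
          - ∫ w', (l n i * z i w' ^ 2 + b n i * z i w') ∂P) ^ 4 ∂P)
      atTop (nhds 0) := by
  obtain ⟨c, hc, hev⟩ := hliminf
  have hM0 : 0 ≤ m8 + m4 + (m2 + a1) ^ 4 :=
    add_nonneg (add_nonneg m8_nonneg m4_nonneg) (by positivity)
  set M : ℝ := m8 + m4 + (m2 + a1) ^ 4 with hMdef
  -- nonnegativity of the sequence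
  have hf0 : ∀ n : ℕ, 0 ≤ (sn2 l b n ^ 2)⁻¹ * ∑ i ∈ Finset.range n,
      ∫ w, (l n i * z i w ^ 2 + b n i * z i w
        - ∫ w', (l n i * z i w' ^ 2 + b n i * z i w') ∂P) ^ 4 ∂P := by
    intro n
    refine mul_nonneg (inv_nonneg.2 (sq_nonneg _)) (Finset.sum_nonneg fun i _ => ?_)
    exact integral_nonneg fun w => by positivity
  refine squeeze_zero' (Filter.Eventually.of_forall hf0) ?_
    (tendsto_const_div_atTop_nhds_zero_nat (27 * C ^ 4 * M / c ^ 2))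
  filter_upwards [hev, eventually_ge_atTop 1] with n hn hn1
  have hnR : (1 : ℝ) ≤ (n : ℝ) := by exact_mod_cast hn1
  have hnpos : (0 : ℝ) < (n : ℝ) := by linarith
  have hD0 : (0 : ℝ) ≤ C / (n : ℝ) ^ ((3 : ℝ) / 2) := by positivity
  set D : ℝ := C / (n : ℝ) ^ ((3 : ℝ) / 2) with hDdef
  -- each term of the sum is at most `27 * D^4 * M`
  have hterm : ∀ i ∈ Finset.range n,
      (∫ w, (l n i * z i w ^ 2 + b n i * z i w
        - ∫ w', (l n i * z i w' ^ 2 + b n i * z i w') ∂P) ^ 4 ∂P) ≤ 27 * D ^ 4 * M := by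
    intro i hi
    rw [Finset.mem_range] at hi
    have hL := hl n i hi
    have hB := hb n i hi
    have hgm : AEStronglyMeasurable (fun y : ℝ => l n i * y ^ 2 + b n i * y)
        (Measure.map (z i) P) :=
      ((measurable_const.mul (measurable_id.pow_const 2)).add
        (measurable_const.mul measurable_id)).aestronglyMeasurable
    have hinner : (∫ w', (l n i * z i w' ^ 2 + b n i * z i w') ∂P)
        = ∫ y, (l n i * y ^ 2 + b n i * y) ∂(gaussianReal 0 1) := by
      rw [← hgauss i, integral_map (hmeas i).aemeasurable hgm]
    set E : ℝ := ∫ y, (l n i * y ^ 2 + b n i * y) ∂(gaussianReal 0 1) with hEdef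
    have hg4 : AEStronglyMeasurable (fun x : ℝ => (l n i * x ^ 2 + b n i * x - E) ^ 4)
        (Measure.map (z i) P) :=
      ((((measurable_const.mul (measurable_id.pow_const 2)).add
        (measurable_const.mul measurable_id)).sub measurable_const).pow_const 4).aestronglyMeasurable
    have houter : (∫ w, (l n i * z i w ^ 2 + b n i * z i w
          - ∫ w', (l n i * z i w' ^ 2 + b n i * z i w') ∂P) ^ 4 ∂P)
        = ∫ x, (l n i * x ^ 2 + b n i * x - E) ^ 4 ∂(gaussianReal 0 1) := by
      rw [hinner, ← hgauss i, integral_map (hmeas i).aemeasurable hg4]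
    rw [houter]
    refine le_trans (key (l n i) (b n i)) ?_
    have e1 : l n i ^ 4 ≤ D ^ 4 := by
      rw [← (by decide : Even 4).pow_abs (l n i)]
      exact pow_le_pow_left₀ (abs_nonneg _) hL 4
    have e2 : b n i ^ 4 ≤ D ^ 4 := by
      rw [← (by decide : Even 4).pow_abs (b n i)]
      exact pow_le_pow_left₀ (abs_nonneg _) hB 4
    have e3 : (|l n i| * m2 + |b n i| * a1) ^ 4 ≤ D ^ 4 * (m2 + a1) ^ 4 := by
      rw [← mul_pow]
      refine pow_le_pow_left₀ (add_nonneg (mul_nonneg (abs_nonneg _) m2_nonneg)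
        (mul_nonneg (abs_nonneg _) a1_nonneg)) ?_ 4
      have := mul_le_mul_of_nonneg_right hL m2_nonneg
      have := mul_le_mul_of_nonneg_right hB a1_nonneg
      nlinarith [m2_nonneg, a1_nonneg]
    have t1 := mul_le_mul_of_nonneg_right e1 m8_nonneg
    have t2 := mul_le_mul_of_nonneg_right e2 m4_nonneg
    rw [hMdef]
    nlinarith [t1, t2, e3]
  have hS0 : 0 ≤ ∑ i ∈ Finset.range n,
      ∫ w, (l n i * z i w ^ 2 + b n i * z i w
        - ∫ w', (l n i * z i w' ^ 2 + b n i * z i w') ∂P) ^ 4 ∂P :=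
    Finset.sum_nonneg fun i _ => integral_nonneg fun w => by positivity
  have hS : (∑ i ∈ Finset.range n,
      ∫ w, (l n i * z i w ^ 2 + b n i * z i w
        - ∫ w', (l n i * z i w' ^ 2 + b n i * z i w') ∂P) ^ 4 ∂P)
      ≤ (n : ℝ) * (27 * D ^ 4 * M) := by
    have := Finset.sum_le_card_nsmul (Finset.range n) _ _ hterm
    simpa [Finset.card_range, nsmul_eq_mul] using this
  -- bound on the inverse of `sn2 ^ 2`
  have hsn : c / (n : ℝ) ^ 2 ≤ sn2 l b n := by
    rw [div_le_iff₀ (by positivity)]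
    linarith [hn, mul_comm (sn2 l b n) ((n : ℝ) ^ 2)]
  have hsnpos : 0 < sn2 l b n := lt_of_lt_of_le (by positivity) hsn
  have hinv : (sn2 l b n ^ 2)⁻¹ ≤ (n : ℝ) ^ 4 / c ^ 2 := by
    have h1 : (c / (n : ℝ) ^ 2) ^ 2 ≤ sn2 l b n ^ 2 :=
      pow_le_pow_left₀ (by positivity) hsn 2
    have h2 : (sn2 l b n ^ 2)⁻¹ ≤ ((c / (n : ℝ) ^ 2) ^ 2)⁻¹ :=
      inv_anti₀ (by positivity) h1
    refine h2.trans (le_of_eq ?_)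
    rw [div_pow, inv_div, div_eq_div_iff (by positivity) (by positivity)]
    ring
  -- D^4 = C^4 / n^6
  have hD4 : D ^ 4 = C ^ 4 / (n : ℝ) ^ 6 := by
    rw [hDdef, div_pow]
    congr 1
    rw [← Real.rpow_natCast ((n : ℝ) ^ ((3 : ℝ) / 2)) 4, ← Real.rpow_mul (Nat.cast_nonneg n)]
    norm_num
  calc (sn2 l b n ^ 2)⁻¹ * ∑ i ∈ Finset.range n,
        ∫ w, (l n i * z i w ^ 2 + b n i * z i w
          - ∫ w', (l n i * z i w' ^ 2 + b n i * z i w') ∂P) ^ 4 ∂P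
      ≤ ((n : ℝ) ^ 4 / c ^ 2) * ((n : ℝ) * (27 * D ^ 4 * M)) :=
        mul_le_mul hinv hS hS0 (by positivity)
    _ = 27 * C ^ 4 * M / c ^ 2 / (n : ℝ) := by
        rw [hD4]
        field_simp

end LSSVM
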